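/- Let P be a generic configuration of 2n points in convex position (vertices of a convex 2n-gon, labeled cyclically s_0,...,s_{2n−1}). Then under the Orchard relation, s_a ∼ s_b if and only if a ≡ b (mod 2); i.e., the Orchard classes are the even-indexed and odd-indexed vertices, each of size n. -/

import Mathlib

open scoped Classical
open Fin.NatCast

noncomputable section

/-- Orientation determinant of two vectors in the plane. -/
def det2 (u v : ℝ × ℝ) : ℝ := u.1 * v.2 - u.2 * v.1

/-- The line through `A` and `B` separates the points `P` and `Q`
(they lie in distinct open half-planes determined by the line). -/
def SepLine (A B P Q : ℝ × ℝ) : Prop :=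
  det2 (B - A) (P - A) * det2 (B - A) (Q - A) < 0

/-- A finite planar point set is a generic configuration if no three of its
points are collinear. -/
def Generic (C : Finset (ℝ × ℝ)) : Prop :=
  ∀ a ∈ C, ∀ b ∈ C, ∀ c ∈ C, a ≠ b → a ≠ c → b ≠ c →
    ¬ Collinear ℝ ({a, b, c} : Set (ℝ × ℝ))

/-- `nsep C P Q` is the number of lines spanned by (unordered) pairs of points of
`C \ {P,Q}` that separate `P` from `Q`. -/
def nsep (C : Finset (ℝ × ℝ)) (P Q : ℝ × ℝ) : ℕ :=
  (((C \ {P, Q}).powersetCard 2).filter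
    (fun s => ∃ A ∈ s, ∃ B ∈ s, A ≠ B ∧ SepLine A B P Q)).card

/-- The Orchard relation: `P ∼ Q` iff `n(P,Q) ≡ n - 3 (mod 2)` where `n = |C|`. -/
def Orchard (C : Finset (ℝ × ℝ)) (P Q : ℝ × ℝ) : Prop :=
  (nsep C P Q : ℤ) ≡ (C.card : ℤ) - 3 [ZMOD 2]

/-- A configuration is monochromatic if all its points are Orchard-equivalent. -/
def Mono (C : Finset (ℝ × ℝ)) : Prop :=
  ∀ P ∈ C, ∀ Q ∈ C, P ≠ Q → Orchard C P Q

/-- A configuration is in convex position if each of its points is a vertex of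
the convex hull. -/
def ConvexPos (C : Finset (ℝ × ℝ)) : Prop :=
  ∀ P ∈ C, P ∉ convexHull ℝ ((C : Set (ℝ × ℝ)) \ {P})

private lemma det2_cancel' (A B C : ℝ × ℝ) :
    det2 (B - A) (C - A) = det2 (C - B) (A - B) := by
  simp only [det2, Prod.fst_sub, Prod.snd_sub]; ring

private lemma det2_antisymm' (u v : ℝ × ℝ) : det2 u v = - det2 v u := by
  simp only [det2]; ring

private lemma sepline_comm' {A B P Q : ℝ × ℝ} (h : SepLine A B P Q) : SepLine B A P Q := by
  unfold SepLine at *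
  have : det2 (A - B) (P - B) * det2 (A - B) (Q - B)
      = det2 (B - A) (P - A) * det2 (B - A) (Q - A) := by
    simp only [det2, Prod.fst_sub, Prod.snd_sub]; ring
  linarith

private lemma transit' {a x y z : ℝ × ℝ} (hax : 0 < det2 a x) (hay : 0 < det2 a y)
    (haz : 0 < det2 a z) (hxy : 0 < det2 x y) (hyz : 0 < det2 y z) : 0 < det2 x z := by
  have key : det2 a y * det2 x z = det2 a x * det2 y z + det2 a z * det2 x y := by
    simp only [det2]; ring
  nlinarith [mul_pos hax hyz, mul_pos haz hxy]


section Poly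
variable {m : ℕ} [NeZero m] {s : Fin m → ℝ × ℝ}

private lemma cast_ne_zero' {p : ℕ} (hp : 0 < p) (hpm : p < m) : ((p : Fin m)) ≠ 0 := by
  intro h
  have := congrArg Fin.val h
  rw [Fin.val_natCast, Nat.mod_eq_of_lt hpm] at this
  simp at this; omega

private lemma orient' (hconv : ∀ i j : Fin m, j ≠ i → j ≠ i + 1 →
      0 < det2 (s (i + 1) - s i) (s j - s i)) :
    ∀ q p : ℕ, 0 < p → p < q → q < m → ∀ i : Fin m,
      0 < det2 (s (i + (p:Fin m)) - s i) (s (i + (q:Fin m)) - s i) := by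
  intro q
  induction q using Nat.strong_induction_on with
  | _ q ih =>
    intro p hp hpq hq i
    have A : ∀ r : ℕ, 0 < r → r + 1 < m →
        0 < det2 (s (i + (r:Fin m)) - s i) (s (i + ((r+1:ℕ):Fin m)) - s i) := by
      intro r hr hrm
      have h1 : (i + (r:Fin m)) + 1 = i + ((r+1:ℕ):Fin m) := by push_cast; rw [add_assoc]
      have hne1 : i ≠ i + (r:Fin m) := by
        intro h; nth_rewrite 1 [← add_zero i] at h
        exact cast_ne_zero' hr (by omega) (add_left_cancel h).symm
      have hne2 : i ≠ (i + (r:Fin m)) + 1 := by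
        rw [h1]; intro h; nth_rewrite 1 [← add_zero i] at h
        exact cast_ne_zero' (by omega) hrm (add_left_cancel h).symm
      have := hconv (i + (r:Fin m)) i hne1 hne2
      rw [h1] at this
      rw [det2_cancel' (s i) (s (i + (r:Fin m))) (s (i + ((r+1:ℕ):Fin m)))]
      exact this
    by_cases hsucc : p + 1 = q
    · subst hsucc; exact A p hp hq
    · have hpq' : p + 1 < q := by omega
      have hedge : ∀ r : ℕ, 2 ≤ r → r < m →
          0 < det2 (s (i+1) - s i) (s (i + (r:Fin m)) - s i) := by
        intro r hr hrm
        apply hconv i (i + (r:Fin m))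
        · intro h; nth_rewrite 2 [← add_zero i] at h
          exact cast_ne_zero' (by omega) hrm (add_left_cancel h)
        · intro h
          have h1 : i + ((1:ℕ):Fin m) = i + 1 := by norm_cast
          rw [← h1] at h
          have := congrArg Fin.val (add_left_cancel h)
          rw [Fin.val_natCast, Fin.val_natCast, Nat.mod_eq_of_lt hrm,
            Nat.mod_eq_of_lt (by omega : 1 < m)] at this
          omega
      by_cases hp1 : p = 1
      · subst hp1
        have h1 : i + ((1:ℕ):Fin m) = i + 1 := by norm_cast
        rw [h1]
        exact hedge q (by omega) hq
      · have hq1 : q - 1 + 1 = q := by omega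
        refine transit' (a := s (i+1) - s i) (hedge p (by omega) (by omega))
          (hedge (q-1) (by omega) (by omega)) (hedge q (by omega) hq)
          (ih (q-1) (by omega) p hp (by omega) (by omega) i) ?_
        have := A (q-1) (by omega) (by omega)
        rwa [hq1] at this

variable (orient : ∀ q p : ℕ, 0 < p → p < q → q < m → ∀ i : Fin m,
      0 < det2 (s (i + (p:Fin m)) - s i) (s (i + (q:Fin m)) - s i))

include orient

private lemma detneg' {u v : ℕ} (hum : u < m) (hv : 0 < v) (hvm : v < m)
    (huv : u ≠ v) (hu : 0 < u) (i : Fin m) :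
    det2 (s (i + (u:Fin m)) - s i) (s (i + (v:Fin m)) - s i) < 0 ↔ v < u := by
  constructor
  · intro h
    rcases lt_or_gt_of_ne huv with h1 | h1
    · exact absurd (orient v u hu h1 hvm i) (by linarith)
    · exact h1
  · intro h
    have := orient u v hv h hum i
    rw [det2_antisymm'] at this
    linarith

private lemma sep_char' (a : Fin m) {t p q : ℕ} (ht0 : 0 < t) (htm : t < m)
    (hp0 : 0 < p) (hqm : q < m) (hpq : p < q) (hpt : p ≠ t) (hqt : q ≠ t) :
    SepLine (s (a + (p:Fin m))) (s (a + (q:Fin m))) (s a) (s (a + (t:Fin m))) ↔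
      (p < t ∧ t < q) := by
  set c := a + (p : Fin m) with hc
  have e1 : a + (q:Fin m) = c + ((q - p : ℕ) : Fin m) := by
    rw [hc, add_assoc, ← Nat.cast_add, Nat.add_sub_cancel' (le_of_lt hpq)]
  have e2 : a = c + ((m - p : ℕ) : Fin m) := by
    rw [hc, add_assoc, ← Nat.cast_add, Nat.add_sub_cancel' (by omega : p ≤ m),
      Fin.natCast_self, add_zero]
  have hP : 0 < det2 (s (c + ((q - p : ℕ):Fin m)) - s c) (s (c + ((m - p : ℕ):Fin m)) - s c) :=
    orient (m - p) (q - p) (by omega) (by omega) (by omega) c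
  have prodneg : ∀ X Y : ℝ, 0 < X → (X * Y < 0 ↔ Y < 0) := by
    intro X Y hX
    constructor
    · intro h; nlinarith
    · intro h; exact mul_neg_of_pos_of_neg hX h
  by_cases hptlt : p < t
  · have e3 : a + (t:Fin m) = c + ((t - p : ℕ) : Fin m) := by
      rw [hc, add_assoc, ← Nat.cast_add, Nat.add_sub_cancel' (le_of_lt hptlt)]
    rw [SepLine, e3, e1, e2, prodneg _ _ hP,
      detneg' orient (by omega) (by omega) (by omega) (by omega) (by omega) c]
    omega
  · have hptgt : t < p := by omega
    have e3 : a + (t:Fin m) = c + ((m + t - p : ℕ) : Fin m) := by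
      rw [hc, add_assoc, ← Nat.cast_add, (by omega : p + (m + t - p) = m + t),
        Nat.cast_add, Fin.natCast_self, zero_add]
    have hQ : 0 < det2 (s (c + ((q - p : ℕ):Fin m)) - s c)
        (s (c + ((m + t - p : ℕ):Fin m)) - s c) :=
      orient (m + t - p) (q - p) (by omega) (by omega) (by omega) c
    rw [SepLine, e3, e1, e2, prodneg _ _ hP]
    constructor
    · intro h; linarith
    · intro h; omega

private lemma count' (hinj : Function.Injective s) (a : Fin m) {t : ℕ}
    (ht0 : 0 < t) (htm : t < m) :
    nsep (Finset.image s Finset.univ) (s a) (s (a + (t:Fin m)))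
      = (t - 1) * (m - t - 1) := by
  classical
  set C := Finset.image s Finset.univ with hC
  set P := s a with hP
  set Q := s (a + (t:Fin m)) with hQ
  set D := C \ {P, Q} with hD
  have hval : ∀ p : ℕ, p < m → ((p : Fin m) : ℕ) = p := fun p hp => by
    rw [Fin.val_natCast, Nat.mod_eq_of_lt hp]
  have hinj2 : ∀ (i : Fin m) (p q : ℕ), p < m → q < m → s (i + (p:Fin m)) = s (i + (q:Fin m)) → p = q := by
    intro i p q hp hq h
    have := hinj h
    have h2 := add_left_cancel this
    have := congrArg Fin.val h2
    rwa [hval p hp, hval q hq] at this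
  have haz : ∀ p : ℕ, 0 < p → p < m → s (a + (p:Fin m)) ≠ s a := by
    intro p hp hpm h
    nth_rewrite 2 [← add_zero a] at h
    have : p = ((0:ℕ) : Fin m).val := by
      have := hinj2 a p (((0:ℕ):Fin m)).val hpm (Fin.is_lt _) (by rw [Fin.cast_val_eq_self]; exact h)
      exact this
    rw [Nat.cast_zero] at this
    simp at this; omega
  have hmemD : ∀ p : ℕ, 0 < p → p < m → p ≠ t → s (a + (p:Fin m)) ∈ D := by
    intro p hp hpm hpt
    rw [hD, Finset.mem_sdiff]
    constructor
    · exact Finset.mem_image.mpr ⟨a + (p:Fin m), Finset.mem_univ _, rfl⟩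
    · intro h
      rcases Finset.mem_insert.mp h with h | h
      · exact haz p hp hpm (h.trans hP.symm ▸ h)
      · rw [Finset.mem_singleton] at h
        exact hpt (hinj2 a p t hpm htm h)
  have key : (((D.powersetCard 2)).filter
        (fun e => ∃ A ∈ e, ∃ B ∈ e, A ≠ B ∧ SepLine A B P Q))
      = (Finset.Ioo 0 t ×ˢ Finset.Ioo t m).image
        (fun pq => ({s (a + (pq.1:Fin m)), s (a + (pq.2:Fin m))} : Finset (ℝ × ℝ))) := by
    ext e
    simp only [Finset.mem_filter, Finset.mem_powersetCard, Finset.mem_image,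
      Finset.mem_product, Finset.mem_Ioo]
    constructor
    · rintro ⟨⟨hsub, hcard⟩, A, hA, B, hB, hAB, hsep⟩
      have hsub2 : ({A, B} : Finset (ℝ × ℝ)) ⊆ e :=
        Finset.insert_subset hA (Finset.singleton_subset_iff.mpr hB)
      have he2 : ({A, B} : Finset (ℝ × ℝ)) = e :=
        Finset.eq_of_subset_of_card_le hsub2 (by rw [hcard, Finset.card_pair hAB])
      have hAD := hsub hA
      have hBD := hsub hB
      rw [hD, Finset.mem_sdiff] at hAD hBD
      obtain ⟨ca, _, hca⟩ := Finset.mem_image.mp hAD.1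
      obtain ⟨cb, _, hcb⟩ := Finset.mem_image.mp hBD.1
      set p := ((ca - a : Fin m)).val with hp
      set q := ((cb - a : Fin m)).val with hq
      have hpca : ca = a + ((p:ℕ) : Fin m) := by
        rw [hp, Fin.cast_val_eq_self, add_comm, sub_add_cancel]
      have hqcb : cb = a + ((q:ℕ) : Fin m) := by
        rw [hq, Fin.cast_val_eq_self, add_comm, sub_add_cancel]
      have hpm : p < m := Fin.is_lt _
      have hqm : q < m := Fin.is_lt _
      have hAne : A ≠ P ∧ A ≠ Q := by
        have := hAD.2; simp only [Finset.mem_insert, Finset.mem_singleton] at this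
        tauto
      have hBne : B ≠ P ∧ B ≠ Q := by
        have := hBD.2; simp only [Finset.mem_insert, Finset.mem_singleton] at this
        tauto
      have hp0 : 0 < p := by
        rcases Nat.eq_zero_or_pos p with h | h
        · exfalso
          apply hAne.1
          rw [← hca, hpca, h, Nat.cast_zero, add_zero, hP]
        · exact h
      have hq0 : 0 < q := by
        rcases Nat.eq_zero_or_pos q with h | h
        · exfalso
          apply hBne.1
          rw [← hcb, hqcb, h, Nat.cast_zero, add_zero, hP]
        · exact h
      have hpt : p ≠ t := by
        intro h
        apply hAne.2
        rw [← hca, hpca, h, hQ]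
      have hqt : q ≠ t := by
        intro h
        apply hBne.2
        rw [← hcb, hqcb, h, hQ]
      have hpq : p ≠ q := by
        intro h
        apply hAB
        rw [← hca, ← hcb, hpca, hqcb, h]
      rw [← hca, ← hcb, hpca, hqcb, hP, hQ] at hsep
      rcases lt_or_gt_of_ne hpq with hlt | hgt
      · obtain ⟨h1, h2⟩ := (sep_char' orient a ht0 htm hp0 hqm hlt hpt hqt).mp hsep
        refine ⟨(p, q), ⟨⟨hp0, h1⟩, h2, hqm⟩, ?_⟩
        simp only
        rw [← he2, ← hca, ← hcb, hpca, hqcb]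
      · have hsep2 := sepline_comm' hsep
        obtain ⟨h1, h2⟩ := (sep_char' orient a ht0 htm hq0 hpm hgt hqt hpt).mp hsep2
        refine ⟨(q, p), ⟨⟨hq0, h1⟩, h2, hpm⟩, ?_⟩
        simp only
        rw [← he2, Finset.pair_comm A B, ← hca, ← hcb, hpca, hqcb]
    · rintro ⟨⟨p, q⟩, ⟨⟨hp0, hpt⟩, ⟨htq, hqm⟩⟩, rfl⟩
      have hne : s (a + (p:Fin m)) ≠ s (a + (q:Fin m)) := by
        intro h; have := hinj2 a p q (by omega) hqm h; omega
      refine ⟨⟨?_, ?_⟩, s (a + (p:Fin m)), Finset.mem_insert_self _ _,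
        s (a + (q:Fin m)), by simp, hne, ?_⟩
      · refine Finset.insert_subset (hmemD p hp0 (by omega) (by omega))
          (Finset.singleton_subset_iff.mpr (hmemD q (by omega) hqm (by omega)))
      · exact Finset.card_pair hne
      · rw [hP, hQ]
        exact (sep_char' orient a ht0 htm hp0 hqm (by omega) (by omega) (by omega)).mpr
          ⟨hpt, htq⟩
  have hinjOn : Set.InjOn
      (fun pq : ℕ × ℕ => ({s (a + (pq.1:Fin m)), s (a + (pq.2:Fin m))} : Finset (ℝ × ℝ)))
      ↑(Finset.Ioo 0 t ×ˢ Finset.Ioo t m) := by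
    rintro ⟨p, q⟩ hpq ⟨p', q'⟩ hpq' h
    simp only [Finset.coe_product, Set.mem_prod, Finset.mem_coe, Finset.mem_Ioo] at hpq hpq'
    obtain ⟨⟨hp0, hpt⟩, htq, hqm⟩ := hpq
    obtain ⟨⟨hp0', hpt'⟩, htq', hqm'⟩ := hpq'
    simp only at h
    have h1 : s (a + (p:Fin m)) ∈ ({s (a + (p':Fin m)), s (a + (q':Fin m))} : Finset (ℝ × ℝ)) := by
      rw [← h]; exact Finset.mem_insert_self _ _
    have hpp' : p = p' := by
      rcases Finset.mem_insert.mp h1 with h2 | h2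
      · exact hinj2 a p p' (by omega) (by omega) h2
      · rw [Finset.mem_singleton] at h2
        have := hinj2 a p q' (by omega) (by omega) h2
        omega
    have h3 : s (a + (q:Fin m)) ∈ ({s (a + (p':Fin m)), s (a + (q':Fin m))} : Finset (ℝ × ℝ)) := by
      rw [← h]; exact Finset.mem_insert_of_mem (Finset.mem_singleton_self _)
    have hqq' : q = q' := by
      rcases Finset.mem_insert.mp h3 with h2 | h2
      · have := hinj2 a q p' (by omega) (by omega) h2
        omega
      · rw [Finset.mem_singleton] at h2
        exact hinj2 a q q' (by omega) (by omega) h2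
    simp [hpp', hqq']
  rw [nsep, key, Finset.card_image_of_injOn hinjOn, Finset.card_product,
    Nat.card_Ioo, Nat.card_Ioo]
  rw [Nat.sub_zero]

end Poly

/-- For the vertices `s 0, …, s (2n-1)` of a convex `2n`-gon labeled in
(counterclockwise) cyclic order, the Orchard classes are exactly the
even-indexed and odd-indexed vertices: `s a ∼ s b` iff `a ≡ b (mod 2)`. -/
theorem even_polygon_alternating (m n : ℕ) [NeZero m] (hm : m = 2 * n)
    (s : Fin m → ℝ × ℝ) (hinj : Function.Injective s)
    (hgen : Generic (Finset.image s Finset.univ))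
    (hconv : ∀ i j : Fin m, j ≠ i → j ≠ i + 1 →
      0 < det2 (s (i + 1) - s i) (s j - s i)) :
    ∀ a b : Fin m, a ≠ b →
      (Orchard (Finset.image s Finset.univ) (s a) (s b) ↔ (a : ℕ) % 2 = (b : ℕ) % 2) := by
  intro a b hab
  have horient := orient' hconv
  set t : ℕ := ((b - a : Fin m)).val with ht
  have htm : t < m := Fin.is_lt _
  have hb : b = a + (t : Fin m) := by
    rw [ht, Fin.cast_val_eq_self, add_comm, sub_add_cancel]
  have ht0 : 0 < t := by
    rcases Nat.eq_zero_or_pos t with h | h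
    · exfalso; apply hab
      rw [hb, h, Nat.cast_zero, add_zero]
    · exact h
  have hcnt : nsep (Finset.image s Finset.univ) (s a) (s b) = (t - 1) * (m - t - 1) := by
    rw [hb]; exact count' horient hinj a ht0 htm
  have hcard : (Finset.image s Finset.univ).card = m := by
    rw [Finset.card_image_of_injective _ hinj, Finset.card_univ, Fintype.card_fin]
  have hbval : (b : ℕ) % 2 = ((a : ℕ) + t) % 2 := by
    have h1 : (b : ℕ) = ((a : ℕ) + t) % m := by
      rw [hb, Fin.val_add, Fin.val_natCast, Nat.mod_eq_of_lt htm]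
    rw [h1, Nat.mod_mod_of_dvd _ ⟨n, hm⟩]
  rcases Nat.mod_two_eq_zero_or_one t with h | h
  · have a1 : (t - 1) % 2 = 1 := by omega
    have a2 : (m - t - 1) % 2 = 1 := by omega
    have e1 : nsep (Finset.image s Finset.univ) (s a) (s b) % 2 = 1 := by
      rw [hcnt, Nat.mul_mod, a1, a2]
    unfold Orchard Int.ModEq
    rw [hcard]
    omega
  · have a1 : (t - 1) % 2 = 0 := by omega
    have e1 : nsep (Finset.image s Finset.univ) (s a) (s b) % 2 = 0 := by
      rw [hcnt, Nat.mul_mod, a1]; simp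
    unfold Orchard Int.ModEq
    rw [hcard]
    omega
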